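/- Let G be a finite abelian group with |G| = m and let A ⊆ G. If R_A(g) ≤ 5 for all g ∈ G, then |S_2| + |S_4| ≤ (3/4)m + √(5m), where |S_2| and |S_4| denote the number of elements g ∈ G with R_A(g) = 2 and R_A(g) = 4, respectively. -/
import Mathlib

open Finset

/-- `repFn A g` is the number of ordered pairs `(a, a') ∈ A × A` with `a + a' = g`. -/
def repFn {G : Type*} [AddCommGroup G] [DecidableEq G] (A : Finset G) (g : G) : ℕ :=
  ((A ×ˢ A).filter fun p => p.1 + p.2 = g).card

/-- `diffFn A g` is the number of ordered pairs `(a, a') ∈ A × A` with `a - a' = g`. -/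
def diffFn {G : Type*} [AddCommGroup G] [DecidableEq G] (A : Finset G) (g : G) : ℕ :=
  ((A ×ˢ A).filter fun p => p.1 - p.2 = g).card

lemma sum_fiber_card {G : Type*} [Fintype G] [DecidableEq G]
    (s : Finset (G × G)) (f : G × G → G) :
    ∑ v : G, (s.filter fun p => f p = v).card = s.card :=
  (Finset.card_eq_sum_card_fiberwise (fun x _ => Finset.mem_univ (f x))).symm

lemma sum_fiber_card_sq {G : Type*} [Fintype G] [DecidableEq G]
    (s : Finset (G × G)) (f : G × G → G) :
    ∑ v : G, (s.filter fun p => f p = v).card ^ 2 =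
      ((s ×ˢ s).filter fun p => f p.1 = f p.2).card := by
  rw [Finset.card_eq_sum_card_fiberwise
    (f := fun p => f p.1) (t := Finset.univ) (fun x _ => Finset.mem_univ _)]
  refine Finset.sum_congr rfl fun v _ => ?_
  rw [Finset.filter_filter]
  have key : ((s ×ˢ s).filter fun p => f p.1 = f p.2 ∧ f p.1 = v) =
      (s.filter fun p => f p = v) ×ˢ (s.filter fun p => f p = v) := by
    ext p
    simp only [Finset.mem_filter, Finset.mem_product]
    constructor
    · rintro ⟨⟨h1, h2⟩, h3, h4⟩
      exact ⟨⟨h1, h4⟩, h2, h3 ▸ h4⟩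
    · rintro ⟨⟨h1, h2⟩, h3, h4⟩
      exact ⟨⟨h1, h3⟩, h2.trans h4.symm, h2⟩
  rw [key, Finset.card_product, sq]

lemma sum_sq_rep_eq_sum_sq_diff {G : Type*} [AddCommGroup G] [Fintype G] [DecidableEq G]
    (A : Finset G) :
    ∑ g : G, (repFn A g) ^ 2 = ∑ u : G, (diffFn A u) ^ 2 := by
  unfold repFn diffFn
  rw [sum_fiber_card_sq, sum_fiber_card_sq]
  refine Finset.card_bij' (fun p _ => ((p.1.1, p.2.1), (p.2.2, p.1.2)))
    (fun q _ => ((q.1.1, q.2.2), (q.1.2, q.2.1))) ?_ ?_ ?_ ?_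
  · rintro ⟨⟨a, b⟩, ⟨c, d⟩⟩ hp
    simp only [Finset.mem_filter, Finset.mem_product] at hp ⊢
    obtain ⟨⟨⟨ha, hb⟩, hc, hd⟩, hsum⟩ := hp
    refine ⟨⟨⟨ha, hc⟩, hd, hb⟩, ?_⟩
    rw [sub_eq_sub_iff_add_eq_add, hsum]
    exact add_comm c d
  · rintro ⟨⟨a, c⟩, ⟨d, b⟩⟩ hq
    simp only [Finset.mem_filter, Finset.mem_product] at hq ⊢
    obtain ⟨⟨⟨ha, hc⟩, hd, hb⟩, hsub⟩ := hq
    refine ⟨⟨⟨ha, hb⟩, hc, hd⟩, ?_⟩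
    rw [sub_eq_sub_iff_add_eq_add] at hsub
    rw [hsub]; exact add_comm d c
  · rintro ⟨⟨a, b⟩, ⟨c, d⟩⟩ _; rfl
  · rintro ⟨⟨a, c⟩, ⟨d, b⟩⟩ _; rfl

lemma diff_zero {G : Type*} [AddCommGroup G] [DecidableEq G] (A : Finset G) :
    diffFn A 0 = A.card := by
  unfold diffFn
  rw [show ((A ×ˢ A).filter fun p => p.1 - p.2 = 0) = A.diag by
    ext p
    simp only [Finset.mem_filter, Finset.mem_product, Finset.mem_diag, sub_eq_zero]
    constructor
    · rintro ⟨⟨h1, _⟩, h3⟩; exact ⟨h1, h3⟩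
    · rintro ⟨h1, h3⟩; exact ⟨⟨h1, h3 ▸ h1⟩, h3⟩]
  exact Finset.diag_card A

lemma rep_pointwise (r : ℕ) (hr : r ≤ 5) :
    8 * ((if r = 2 then 1 else 0) + (if r = 4 then 1 else 0)) + r ^ 2 ≤ 6 * r := by
  interval_cases r <;> decide

lemma diff_pointwise (d : ℕ) : 5 * d ≤ d ^ 2 + 6 := by
  rcases Nat.lt_or_ge d 6 with hd | hd
  · interval_cases d <;> decide
  · calc 5 * d ≤ d * d := Nat.mul_le_mul_right d (by omega)
    _ ≤ d ^ 2 + 6 := by rw [sq]; omega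

theorem stmt_18 {G : Type*} [AddCommGroup G] [Fintype G] [DecidableEq G]
    (m : ℕ) (hm : Fintype.card G = m) (A : Finset G)
    (h : ∀ g : G, repFn A g ≤ 5) :
    (((Finset.univ.filter fun g : G => repFn A g = 2).card : ℝ)) +
      ((Finset.univ.filter fun g : G => repFn A g = 4).card : ℝ) ≤
      (3 / 4 : ℝ) * m + Real.sqrt (5 * m) := by
  set t := A.card with ht
  set N2 := (Finset.univ.filter fun g : G => repFn A g = 2).card with hN2
  set N4 := (Finset.univ.filter fun g : G => repFn A g = 4).card with hN4
  have hm1 : 1 ≤ m := hm ▸ Fintype.card_pos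
  -- X = sum of repFn = t * t
  have hX : ∑ g : G, repFn A g = t * t := by
    simp only [repFn]
    rw [sum_fiber_card (A ×ˢ A) (fun p => p.1 + p.2), Finset.card_product]
  have hXd : ∑ u : G, diffFn A u = t * t := by
    simp only [diffFn]
    rw [sum_fiber_card (A ×ˢ A) (fun p => p.1 - p.2), Finset.card_product]
  -- X ≤ 5 m
  have hX5 : t * t ≤ 5 * m := by
    rw [← hX]
    calc ∑ g : G, repFn A g ≤ ∑ _g : G, 5 := Finset.sum_le_sum fun g _ => h g
    _ = 5 * m := by rw [Finset.sum_const, Finset.card_univ, hm, smul_eq_mul, mul_comm]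
  -- Step A : 8 (N2 + N4) + E ≤ 6 t²
  have stepA : 8 * (N2 + N4) + ∑ g : G, (repFn A g) ^ 2 ≤ 6 * (t * t) := by
    rw [← hX, Finset.mul_sum, hN2, hN4, Finset.card_filter, Finset.card_filter,
      ← Finset.sum_add_distrib, Finset.mul_sum, ← Finset.sum_add_distrib]
    exact Finset.sum_le_sum fun g _ => rep_pointwise (repFn A g) (h g)
  -- Step B : lower bound on E via differences
  have hsplit_sq : (diffFn A 0) ^ 2 + ∑ u ∈ Finset.univ.erase 0, (diffFn A u) ^ 2
      = ∑ u : G, (diffFn A u) ^ 2 :=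
    Finset.add_sum_erase _ (fun u => (diffFn A u) ^ 2) (Finset.mem_univ (0 : G))
  have hsplit : diffFn A 0 + ∑ u ∈ Finset.univ.erase 0, diffFn A u = t * t := by
    rw [Finset.add_sum_erase _ (fun u => diffFn A u) (Finset.mem_univ (0 : G))]; exact hXd
  have hcard_erase : (Finset.univ.erase (0 : G)).card = m - 1 := by
    rw [Finset.card_erase_of_mem (Finset.mem_univ 0), Finset.card_univ, hm]
  have stepB : 5 * (∑ u ∈ Finset.univ.erase 0, diffFn A u)
      ≤ (∑ u ∈ Finset.univ.erase 0, (diffFn A u) ^ 2) + 6 * (m - 1) := by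
    rw [Finset.mul_sum]
    calc ∑ u ∈ Finset.univ.erase (0 : G), 5 * diffFn A u
        ≤ ∑ u ∈ Finset.univ.erase (0 : G), ((diffFn A u) ^ 2 + 6) :=
          Finset.sum_le_sum fun u _ => diff_pointwise _
      _ = (∑ u ∈ Finset.univ.erase (0 : G), (diffFn A u) ^ 2)
            + (Finset.univ.erase (0 : G)).card * 6 := by
          rw [Finset.sum_add_distrib, Finset.sum_const, smul_eq_mul]
      _ = (∑ u ∈ Finset.univ.erase (0 : G), (diffFn A u) ^ 2) + 6 * (m - 1) := by
          rw [hcard_erase, mul_comm]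
  have hD0 : diffFn A 0 = t := diff_zero A
  have hE : ∑ g : G, (repFn A g) ^ 2 = ∑ u : G, (diffFn A u) ^ 2 :=
    sum_sq_rep_eq_sum_sq_diff A
  -- Combine in ℕ : 8 (N2 + N4) ≤ 5 t + 6 m
  have main : 8 * (N2 + N4) ≤ 5 * t + 6 * m := by
    have h1 := stepA
    rw [hE, ← hsplit_sq, hD0] at h1
    -- h1 : 8*(N2+N4) + (t^2 + S2) ≤ 6*(t*t)
    have h2 := hsplit
    rw [hD0] at h2
    have ht2 : t ^ 2 = t * t := sq t
    omega
  -- Pass to ℝ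
  have htr : (t : ℝ) ≤ Real.sqrt (5 * m) := by
    rw [Real.le_sqrt (by positivity) (by positivity)]
    have : ((t : ℝ)) ^ 2 = ((t * t : ℕ) : ℝ) := by push_cast; ring
    rw [this]
    exact_mod_cast hX5
  have hmain : (8 : ℝ) * (N2 + N4) ≤ 5 * t + 6 * m := by exact_mod_cast main
  have hsq : (0 : ℝ) ≤ Real.sqrt (5 * m) := Real.sqrt_nonneg _
  nlinarith [htr, hmain, hsq]
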